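/- Every closed subspace of a Pontryagin space is pseudo-regular: if H is a Kreĭn space with fundamental decomposition H = H₊ ⊕ H₋ where dim H₋ < ∞, and S ⊆ H is closed, then S = R ⊕ N with R regular, N = S ∩ S^⊥ neutral, and R ⊥ N. -/

import Mathlib

open ContinuousLinearMap

noncomputable section

namespace KreinPaper

variable {H : Type*} [NormedAddCommGroup H] [InnerProductSpace ℂ H] [CompleteSpace H]

/-- The indefinite orthogonal companion of a subspace, with respect to the
indefinite inner product `[x, y] = ⟪J x, y⟫`. -/
def kOrth (J : H →L[ℂ] H) (S : Submodule ℂ H) : Submodule ℂ H where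
  carrier := {y | ∀ x ∈ S, (inner ℂ (J x) y : ℂ) = 0}
  add_mem' := by
    intro a b ha hb x hx
    simp only [Set.mem_setOf_eq] at ha hb ⊢
    rw [inner_add_right, ha x hx, hb x hx, add_zero]
  zero_mem' := by
    intro x _
    exact inner_zero_right _
  smul_mem' := by
    intro c a ha x hx
    simp only [Set.mem_setOf_eq] at ha ⊢
    rw [inner_smul_right, ha x hx, mul_zero]

/-- A regular subspace: closed, with `R ∩ R^⊥ = 0` and `R + R^⊥ = H`. -/
def IsRegular (J : H →L[ℂ] H) (R : Submodule ℂ H) : Prop :=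
  IsClosed (R : Set H) ∧ R ⊓ kOrth J R = ⊥ ∧ R ⊔ kOrth J R = ⊤

/-- A neutral subspace: the indefinite inner product vanishes on it. -/
def IsNeutral (J : H →L[ℂ] H) (N : Submodule ℂ H) : Prop :=
  ∀ n ∈ N, (inner ℂ (J n) n : ℂ) = 0

/-- Two subspaces are orthogonal in the indefinite inner product. -/
def AreKOrth (J : H →L[ℂ] H) (A B : Submodule ℂ H) : Prop :=
  ∀ a ∈ A, ∀ b ∈ B, (inner ℂ (J a) b : ℂ) = 0

/-- An operator range: the range of a bounded operator (equivalently, of a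
bounded operator on `H` itself). -/
def IsOpRange (S : Submodule ℂ H) : Prop :=
  ∃ T : H →L[ℂ] H, LinearMap.range (T : H →ₗ[ℂ] H) = S

/-- Quasi-pseudo-regular subspace: an operator range which is the orthogonal
sum of a regular subspace and a neutral subspace. -/
def IsQpr (J : H →L[ℂ] H) (S : Submodule ℂ H) : Prop :=
  IsOpRange S ∧ ∃ R N : Submodule ℂ H,
    IsRegular J R ∧ IsNeutral J N ∧ AreKOrth J R N ∧ S = R ⊔ N

/-- Pseudo-regular subspace: a closed subspace which is the orthogonal
sum of a regular subspace and a neutral subspace. -/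
def IsPseudoRegular (J : H →L[ℂ] H) (S : Submodule ℂ H) : Prop :=
  IsClosed (S : Set H) ∧ ∃ R N : Submodule ℂ H,
    IsRegular J R ∧ IsNeutral J N ∧ AreKOrth J R N ∧ S = R ⊔ N

/-- A fundamental symmetry: a selfadjoint involution. -/
def IsFundSym (J : H →L[ℂ] H) : Prop :=
  IsSelfAdjoint J ∧ J ∘L J = ContinuousLinearMap.id ℂ H

/-- The indefinite (Kreĭn space) adjoint `A* = J A† J`. -/
def kAdj (J : H →L[ℂ] H) (A : H →L[ℂ] H) : H →L[ℂ] H :=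
  J ∘L (ContinuousLinearMap.adjoint A) ∘L J

omit [CompleteSpace H] in
lemma mem_kOrth {J : H →L[ℂ] H} {S : Submodule ℂ H} {y : H} :
    y ∈ kOrth J S ↔ ∀ x ∈ S, (inner ℂ (J x) y : ℂ) = 0 := Iff.rfl

/-- Algebraic Fredholm alternative for finite-rank perturbations of the identity. -/
lemma fredholm_aux {M : Type*} [AddCommGroup M] [Module ℂ M] (K : M →ₗ[ℂ] M)
    (hK : FiniteDimensional ℂ (LinearMap.range K))
    (hinj : Function.Injective (LinearMap.id (R := ℂ) (M := M) + K)) :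
    Function.Surjective (LinearMap.id (R := ℂ) (M := M) + K) := by
  set G := LinearMap.id (R := ℂ) (M := M) + K with hGdef
  have hGapp : ∀ x, G x = x + K x := fun x => rfl
  have hmap : ∀ v ∈ LinearMap.range K, G v ∈ LinearMap.range K := by
    intro v hv
    rw [hGapp]
    exact (LinearMap.range K).add_mem hv (LinearMap.mem_range_self K v)
  let G' : LinearMap.range K →ₗ[ℂ] LinearMap.range K := G.restrict hmap
  have hG'inj : Function.Injective G' := by
    intro a b hab
    exact Subtype.ext (hinj (congrArg Subtype.val hab))
  have hG'surj : Function.Surjective G' :=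
    (LinearMap.injective_iff_surjective (f := G')).mp hG'inj
  intro y
  obtain ⟨w, hw⟩ := hG'surj ⟨K y, LinearMap.mem_range_self K y⟩
  have hw' : (w : M) + K w = K y := by
    have := congrArg Subtype.val hw
    simpa [G', LinearMap.restrict_apply, hGapp] using this
  refine ⟨y - w, ?_⟩
  rw [hGapp, map_sub]
  have : (y - w) + (K y - K w) = y + ((K y) - ((w : M) + K w)) := by abel
  rw [this, hw', sub_self, add_zero]

/-- every closed subspace of a Pontryagin space (here
`dim H₋ < ∞`) is pseudo-regular. -/
theorem closed_subspace_pontryagin_pseudoRegular (J : H →L[ℂ] H)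
    (hJ : IsFundSym J)
    (hfin : FiniteDimensional ℂ (Module.End.eigenspace (J : H →ₗ[ℂ] H) (-1)))
    (S : Submodule ℂ H) (hSclosed : IsClosed (S : Set H)) :
    ∃ R : Submodule ℂ H, IsRegular J R ∧
      IsNeutral J (S ⊓ kOrth J S) ∧
      AreKOrth J R (S ⊓ kOrth J S) ∧
      S = R ⊔ (S ⊓ kOrth J S) := by
  -- basic facts about J
  have hJsa : ∀ x y : H, (inner ℂ (J x) y : ℂ) = inner ℂ x (J y) := by
    intro x y
    conv_lhs => rw [← hJ.1.adjoint_eq]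
    exact ContinuousLinearMap.adjoint_inner_left J y x
  have hJJ : ∀ x : H, J (J x) = x := by
    intro x
    have := congrFun (congrArg (fun (T : H →L[ℂ] H) => (T : H → H)) hJ.2) x
    simpa using this
  set N : Submodule ℂ H := S ⊓ kOrth J S with hN
  -- N is neutral
  have hNneutral : IsNeutral J N := fun n hn => hn.2 n hn.1
  -- any fixed point of J in N is zero
  have hNfix : ∀ n : H, n ∈ N → J n = n → n = 0 := by
    intro n hn hfix
    have h0 : (inner ℂ (J n) n : ℂ) = 0 := hn.2 n hn.1
    rw [hfix, inner_self_eq_zero] at h0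
    exact h0
  -- N is finite dimensional
  have hNfin : FiniteDimensional ℂ N := by
    let f : N →ₗ[ℂ] Module.End.eigenspace (J : H →ₗ[ℂ] H) (-1) :=
      { toFun := fun n => ⟨(n : H) - J n, by
          rw [Module.End.mem_eigenspace_iff]
          have : (J : H →ₗ[ℂ] H) ((n : H) - J n) = J (n : H) - J (J (n : H)) := by
            simp [map_sub]
          rw [this, hJJ]
          simp only [neg_smul, one_smul]
          abel⟩
        map_add' := by
          intro a b
          apply Subtype.ext
          simp only [Submodule.coe_add, map_add, AddSubmonoid.mk_add_mk]
          abel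
        map_smul' := by
          intro c a
          apply Subtype.ext
          simp [map_smul, smul_sub] }
    have hfinj : Function.Injective f := by
      rw [← LinearMap.ker_eq_bot, LinearMap.ker_eq_bot']
      intro n hn0
      have h : (n : H) - J n = 0 := congrArg Subtype.val hn0
      have hfix : J (n : H) = n := by
        have := sub_eq_zero.mp h
        exact this.symm
      exact Subtype.ext (hNfix n n.2 hfix)
    exact FiniteDimensional.of_injective f hfinj
  haveI : CompleteSpace N := FiniteDimensional.complete ℂ N
  -- the regular part
  set R : Submodule ℂ H := S ⊓ Nᗮ with hR
  have hRclosed : IsClosed (R : Set H) := by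
    have : (R : Set H) = (S : Set H) ∩ (Nᗮ : Set H) := rfl
    rw [this]
    exact hSclosed.inter N.isClosed_orthogonal
  have hRleS : R ≤ S := inf_le_left
  have hNleS : N ≤ S := inf_le_left
  -- the decomposition S = R ⊔ N
  have hsup : S = R ⊔ N := by
    apply le_antisymm
    · intro s hs
      have hmem : (Submodule.orthogonalProjectionOnto N s : H) ∈ N := (Submodule.orthogonalProjectionOnto N s).2
      have h1 : s - Submodule.orthogonalProjectionOnto N s ∈ Nᗮ :=
        Submodule.sub_starProjection_mem_orthogonal (K := N) s
      have h2 : s - Submodule.orthogonalProjectionOnto N s ∈ S :=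
        S.sub_mem hs (hNleS hmem)
      have : s = (s - Submodule.orthogonalProjectionOnto N s) + Submodule.orthogonalProjectionOnto N s := by abel
      rw [this]
      exact Submodule.add_mem_sup ⟨h2, h1⟩ hmem
    · exact sup_le hRleS hNleS
  -- R and N are K-orthogonal
  have hKorthRN : AreKOrth J R N := by
    intro a ha b hb
    have hb2 : ∀ x ∈ S, (inner ℂ (J x) b : ℂ) = 0 := hb.2
    exact hb2 a (hRleS ha)
  -- nondegeneracy of R
  have hRnondeg : ∀ r : H, r ∈ R → r ∈ kOrth J R → r = 0 := by
    intro r hr hrk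
    have hrS : r ∈ S := hRleS hr
    have hrkS : r ∈ kOrth J S := by
      intro s hs
      rw [hsup] at hs
      obtain ⟨a, ha, b, hb, rfl⟩ := Submodule.mem_sup.mp hs
      rw [map_add, inner_add_left, hrk a ha]
      have hjrb : (inner ℂ (J r) b : ℂ) = 0 := hb.2 r hrS
      have : (inner ℂ (J b) r : ℂ) = 0 := by
        rw [← inner_conj_symm, ← hJsa r b, hjrb, map_zero]
      rw [this, add_zero]
    have hrN : r ∈ N := ⟨hrS, hrkS⟩
    have hrperp : r ∈ Nᗮ := hr.2
    have : (inner ℂ r r : ℂ) = 0 := hrperp r hrN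
    exact inner_self_eq_zero.mp this
  haveI : CompleteSpace R := hRclosed.completeSpace_coe
  -- the characterization of kOrth J R via the orthogonal projection
  have hkOrthR : ∀ y : H, y ∈ kOrth J R ↔ Submodule.orthogonalProjectionOnto R (J y) = 0 := by
    intro y
    rw [Submodule.orthogonalProjectionOnto_eq_zero_iff]
    constructor
    · intro hy x hx
      rw [← hJsa x y]
      exact hy x hx
    · intro hy x hx
      rw [hJsa x y]
      exact hy x hx
  -- the Gram-type operator on R
  let Klin : R →ₗ[ℂ] R :=
    { toFun := fun r => Submodule.orthogonalProjectionOnto R (J (r : H) - (r : H))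
      map_add' := by
        intro a b
        have h : (J ((↑(a + b) : H)) - (↑(a + b) : H)) =
            (J (a : H) - (a : H)) + (J (b : H) - (b : H)) := by
          simp only [Submodule.coe_add, map_add]
          abel
        show Submodule.orthogonalProjectionOnto R (J ((↑(a + b) : H)) - (↑(a + b) : H)) = _
        rw [h, map_add]
      map_smul' := by
        intro c a
        have h : (J ((↑(c • a) : H)) - (↑(c • a) : H)) = c • (J (a : H) - (a : H)) := by
          simp only [Submodule.coe_smul, map_smul, smul_sub]
        show Submodule.orthogonalProjectionOnto R (J ((↑(c • a) : H)) - (↑(c • a) : H)) = _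
        rw [h, map_smul]
        rfl }
  set G : R →ₗ[ℂ] R := LinearMap.id (R := ℂ) (M := R) + Klin with hGdef
  have hGval : ∀ r : R, G r = Submodule.orthogonalProjectionOnto R (J (r : H)) := by
    intro r
    have h1 : G r = r + Klin r := rfl
    have h2 : Klin r = Submodule.orthogonalProjectionOnto R (J (r : H)) - Submodule.orthogonalProjectionOnto R (r : H) := by
      show Submodule.orthogonalProjectionOnto R (J (r : H) - (r : H)) = _
      rw [map_sub]
    rw [h1, h2, Submodule.orthogonalProjectionOnto_mem_subspace_eq_self]
    abel
  -- Klin has finite rank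
  have hKfin : FiniteDimensional ℂ (LinearMap.range Klin) := by
    have hle : LinearMap.range Klin ≤
        (Module.End.eigenspace (J : H →ₗ[ℂ] H) (-1)).map
          (Submodule.orthogonalProjectionOnto R : H →ₗ[ℂ] R) := by
      rintro - ⟨r, rfl⟩
      refine Submodule.mem_map.mpr ⟨J (r : H) - (r : H), ?_, rfl⟩
      rw [Module.End.mem_eigenspace_iff]
      have : (J : H →ₗ[ℂ] H) (J (r : H) - (r : H)) = J (J (r : H)) - J (r : H) := by
        simp [map_sub]
      rw [this, hJJ]
      simp only [neg_smul, one_smul]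
      abel
    haveI : FiniteDimensional ℂ
        ((Module.End.eigenspace (J : H →ₗ[ℂ] H) (-1)).map
          (Submodule.orthogonalProjectionOnto R : H →ₗ[ℂ] R)) := by
      exact Module.Finite.map _ _
    exact Submodule.finiteDimensional_of_le hle
  -- G is injective
  have hGinj : Function.Injective G := by
    rw [← LinearMap.ker_eq_bot, LinearMap.ker_eq_bot']
    intro r hr0
    have hPz : Submodule.orthogonalProjectionOnto R (J (r : H)) = 0 := by rw [← hGval r, hr0]
    have hk : (r : H) ∈ kOrth J R := (hkOrthR (r : H)).mpr hPz
    exact Subtype.ext (hRnondeg (r : H) r.2 hk)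
  -- G is surjective
  have hGsurj : Function.Surjective G := fredholm_aux Klin hKfin hGinj
  refine ⟨R, ⟨hRclosed, ?_, ?_⟩, hNneutral, hKorthRN, hsup⟩
  · -- R ⊓ kOrth J R = ⊥
    rw [eq_bot_iff]
    intro r hrm
    exact hRnondeg r hrm.1 hrm.2
  · -- R ⊔ kOrth J R = ⊤
    rw [eq_top_iff]
    intro y _
    obtain ⟨r, hr⟩ := hGsurj (Submodule.orthogonalProjectionOnto R (J y))
    have hyr : y - (r : H) ∈ kOrth J R := by
      rw [hkOrthR]
      rw [map_sub, map_sub, ← hGval r, hr, sub_self]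
    have : y = (r : H) + (y - (r : H)) := by abel
    rw [this]
    exact Submodule.add_mem_sup r.2 hyr
end KreinPaper
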